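/- Let C be a small finitely complete category with an admissible class M of monomorphisms. The map j_M on the subobject classifier of presheaves on C, given on a sieve S on C by (j_M)_C(S) = {f | ∃ g ∈ M/dom f with f∘g ∈ S}, is a Lawvere–Tierney topology: it preserves the maximal sieve, commutes with binary intersections of sieves, and is idempotent. -/
import Mathlib


open CategoryTheory Opposite CategoryTheory.Limits

universe v u

variable {C : Type u} [Category.{v} C] [HasFiniteLimits C]

/-- An admissible class of monomorphisms on a finitely complete category `C`:
contains identities, closed under composition, and stable under pullback. -/
structure AdmissibleClass (C : Type u) [Category.{v} C] [HasFiniteLimits C] where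
  cls : ∀ ⦃Y X : C⦄, (Y ⟶ X) → Prop
  mono : ∀ ⦃Y X : C⦄ (f : Y ⟶ X), cls f → Mono f
  id_mem : ∀ X : C, cls (𝟙 X)
  comp_mem : ∀ ⦃Z Y X : C⦄ (g : Z ⟶ Y) (f : Y ⟶ X), cls g → cls f → cls (g ≫ f)
  pullback_stable : ∀ ⦃A B X : C⦄ (f : A ⟶ X) (m : B ⟶ X), cls m →
    cls (pullback.fst f m)

/-- The diagonal `f × g = f ∘ f⁻¹(g)` of the pullback of `f` and `g` over `X`,
i.e. the product of `f` and `g` in the slice over `X`. -/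
noncomputable def dprod {A B X : C} (f : A ⟶ X) (g : B ⟶ X) : pullback f g ⟶ X :=
  pullback.fst f g ≫ f

/-- The action of an arrow `m : A ⟶ X` on sieves: `S·m = { h | m × h ∈ S }`. -/
noncomputable def sieveAct {X A : C} (S : Sieve X) (m : A ⟶ X) : Sieve X where
  arrows := fun _Y h => S (pullback.fst m h ≫ m)
  downward_closed := by
    intro Y Z h hh g
    have hl : pullback.lift (pullback.fst m (g ≫ h)) (pullback.snd m (g ≫ h) ≫ g)
        (by rw [pullback.condition]; simp) ≫ pullback.fst m h
        = pullback.fst m (g ≫ h) := pullback.lift_fst _ _ _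
    show S (pullback.fst m (g ≫ h) ≫ m)
    rw [← hl, Category.assoc]
    exact S.downward_closed hh _


/-- The sieve `j_M(S)`. -/
noncomputable def jMSieve (M : AdmissibleClass C) {X : C} (S : Sieve X) : Sieve X where
  arrows := fun _Y f => ∃ (Z : C) (g : Z ⟶ _Y), M.cls g ∧ S (g ≫ f)
  downward_closed := by
    intro Y Y' f ⟨Z, g, hg, hS⟩ h
    refine ⟨pullback h g, pullback.fst h g, M.pullback_stable h g hg, ?_⟩
    have : pullback.fst h g ≫ h ≫ f = pullback.snd h g ≫ g ≫ f := by
      rw [← Category.assoc, pullback.condition, Category.assoc]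
    rw [this]
    exact S.downward_closed hS _

/-- the map `j_M(S) = { f | ∃ g ∈ M/dom f, f∘g ∈ S }` is a well-defined
map of sieves which is a Lawvere–Tierney topology: it preserves the maximal sieve,
commutes with binary intersections, and is idempotent. -/
theorem jM_is_topology (M : AdmissibleClass C) :
    ∃ j : ∀ ⦃X : C⦄, Sieve X → Sieve X,
      (∀ (X : C) (S : Sieve X) ⦃Y : C⦄ (f : Y ⟶ X),
          j S f ↔ ∃ (Z : C) (g : Z ⟶ Y), M.cls g ∧ S (g ≫ f)) ∧
      (∀ X : C, j (⊤ : Sieve X) = ⊤) ∧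
      (∀ (X : C) (S T : Sieve X), j (S ⊓ T) = j S ⊓ j T) ∧
      (∀ (X : C) (S : Sieve X), j (j S) = j S) := by
  refine ⟨fun X S => jMSieve M S, fun X S Y f => Iff.rfl, ?_, ?_, ?_⟩
  · intro X
    ext Y f
    simp only [Sieve.top_apply, iff_true]
    exact ⟨Y, 𝟙 Y, M.id_mem Y, trivial⟩
  · intro X S T
    ext Y f
    constructor
    · rintro ⟨Z, g, hg, hS, hT⟩
      exact ⟨⟨Z, g, hg, hS⟩, ⟨Z, g, hg, hT⟩⟩
    · rintro ⟨⟨Z1, g1, hg1, hS⟩, ⟨Z2, g2, hg2, hT⟩⟩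
      refine ⟨pullback g1 g2, pullback.fst g1 g2 ≫ g1,
        M.comp_mem _ _ (M.pullback_stable g1 g2 hg2) hg1, ?_, ?_⟩
      · rw [Category.assoc]; exact S.downward_closed hS _
      · have : (pullback.fst g1 g2 ≫ g1) ≫ f = pullback.snd g1 g2 ≫ g2 ≫ f := by
          rw [← Category.assoc, pullback.condition, Category.assoc]
        rw [this]
        exact T.downward_closed hT _
  · intro X S
    ext Y f
    constructor
    · rintro ⟨Z, g, hg, W, h, hh, hS⟩
      exact ⟨W, h ≫ g, M.comp_mem _ _ hh hg, by rwa [Category.assoc]⟩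
    · rintro ⟨Z, g, hg, hS⟩
      exact ⟨Z, g, hg, Z, 𝟙 Z, M.id_mem Z, by rwa [Category.id_comp]⟩
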